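/- Let 𝔫 be the 5-dimensional real Lie algebra l₅,₇ (case A) with orthonormal basis {E₁,…,E₅} and non-zero brackets [E₁,E₂] = m·E₃ + u·E₅, [E₁,E₃] = v·E₄ + w·E₅, [E₁,E₄] = x·E₅, where m, v, x > 0, u ∈ ℝ and w ≥ 0. Then there exist c ∈ ℝ and a derivation D of 𝔫 with Ric = c·Id + D if and only if x = m, u = 0, w = 0 and v = (2/√3)·m; moreover, in that case necessarily c = −2m². -/
import Mathlib


open scoped BigOperators

namespace Nilsoliton5

noncomputable section

abbrev V : Type := Fin 5 → ℝ

/-- The orthonormal basis vectors E₁,…,E₅ (indexed 0,…,4). -/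
def E (i : Fin 5) : V := Pi.single i 1

/-- The inner product making `E` an orthonormal basis. -/
def ip (x y : V) : ℝ := ∑ i, x i * y i

/-- `D` is a derivation of the bracket `br`. -/
def IsDerivation (br : V → V → V) (D : V →ₗ[ℝ] V) : Prop :=
  ∀ X Y : V, D (br X Y) = br (D X) Y + br X (D Y)

/-- `Ric` is the Ricci operator of the nilpotent Lie group with left-invariant
metric determined by the bracket `br` and the orthonormal basis `E`. -/
def IsRicci (br : V → V → V) (Ric : V →ₗ[ℝ] V) : Prop :=
  ∀ X Y : V, ip (Ric X) Y =
      -(1/2) * (∑ i : Fin 5, ip (br X (E i)) (br Y (E i)))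
      + (1/4) * (∑ i : Fin 5, ∑ j : Fin 5, ip (br (E i) (E j)) X * ip (br (E i) (E j)) Y)

/-- The bracket of l₅,₇ (case A): [E₁,E₂] = m·E₃ + u·E₅,
[E₁,E₃] = v·E₄ + w·E₅, [E₁,E₄] = x·E₅. -/
def br (m u v w x : ℝ) (X Y : V) : V :=
  (m * (X 0 * Y 1 - X 1 * Y 0)) • E 2 + (v * (X 0 * Y 2 - X 2 * Y 0)) • E 3 + (u * (X 0 * Y 1 - X 1 * Y 0) + w * (X 0 * Y 2 - X 2 * Y 0) + x * (X 0 * Y 3 - X 3 * Y 0)) • E 4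


lemma E_apply (i j : Fin 5) : E i j = if j = i then 1 else 0 := Pi.single_apply i 1 j

lemma br_apply (m u v w x : ℝ) (X Y : V) (k : Fin 5) :
    br m u v w x X Y k =
      (if k = 2 then m * (X 0 * Y 1 - X 1 * Y 0) else 0)
      + (if k = 3 then v * (X 0 * Y 2 - X 2 * Y 0) else 0)
      + (if k = 4 then u * (X 0 * Y 1 - X 1 * Y 0) + w * (X 0 * Y 2 - X 2 * Y 0) + x * (X 0 * Y 3 - X 3 * Y 0) else 0) := by
  simp [br, E_apply, Pi.add_apply, Pi.smul_apply, smul_eq_mul, mul_ite, mul_one, mul_zero]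

lemma ip_eq (z y : V) : ip z y = z 0 * y 0 + z 1 * y 1 + z 2 * y 2 + z 3 * y 3 + z 4 * y 4 := by
  simp [ip, Fin.sum_univ_five]

lemma ip_E (z : V) (b : Fin 5) : ip z (E b) = z b := by
  fin_cases b <;> simp [ip_eq, E_apply]

lemma ip_br_br (m u v w x : ℝ) (X Y X' Y' : V) :
    ip (br m u v w x X Y) (br m u v w x X' Y') =
      m^2 * (X 0 * Y 1 - X 1 * Y 0) * (X' 0 * Y' 1 - X' 1 * Y' 0)
      + v^2 * (X 0 * Y 2 - X 2 * Y 0) * (X' 0 * Y' 2 - X' 2 * Y' 0)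
      + (u * (X 0 * Y 1 - X 1 * Y 0) + w * (X 0 * Y 2 - X 2 * Y 0) + x * (X 0 * Y 3 - X 3 * Y 0))
        * (u * (X' 0 * Y' 1 - X' 1 * Y' 0) + w * (X' 0 * Y' 2 - X' 2 * Y' 0) + x * (X' 0 * Y' 3 - X' 3 * Y' 0)) := by
  rw [ip_eq]; simp [br_apply]; ring

/-- The Ricci matrix entries. -/
def Rmat (m u v w x : ℝ) : Fin 5 → Fin 5 → ℝ
  | 0, 0 => -(m^2+u^2+v^2+w^2+x^2)/2
  | 1, 1 => -(m^2+u^2)/2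
  | 1, 2 => -(u*w)/2
  | 2, 1 => -(u*w)/2
  | 1, 3 => -(u*x)/2
  | 3, 1 => -(u*x)/2
  | 2, 2 => (m^2-v^2-w^2)/2
  | 2, 3 => -(w*x)/2
  | 3, 2 => -(w*x)/2
  | 2, 4 => m*u/2
  | 4, 2 => m*u/2
  | 3, 3 => (v^2-x^2)/2
  | 3, 4 => v*w/2
  | 4, 3 => v*w/2
  | 4, 4 => (u^2+w^2+x^2)/2
  | _, _ => 0

set_option maxHeartbeats 2000000 in
lemma ric_entries (m u v w x : ℝ) (Ric : V →ₗ[ℝ] V) (hRic : IsRicci (br m u v w x) Ric) :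
    ∀ a b : Fin 5, Ric (E a) b = Rmat m u v w x a b := by
  intro a b
  have h := hRic (E a) (E b)
  rw [ip_E] at h
  rw [h]
  fin_cases a <;> fin_cases b <;>
    (simp only [ip_E, ip_br_br, Fin.sum_univ_five]; simp [br_apply, E_apply, Rmat]; try ring)

def dvec (m : ℝ) : Fin 5 → ℝ
  | 0 => m^2/3
  | 1 => 3*m^2/2
  | 2 => 11*m^2/6
  | 3 => 13*m^2/6
  | _ => 5*m^2/2

def diagMap (d : Fin 5 → ℝ) : V →ₗ[ℝ] V where
  toFun X := fun k => d k * X k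
  map_add' X Y := by funext k; simp [mul_add]
  map_smul' r X := by funext k; simp [smul_eq_mul]; ring

lemma diagMap_apply (d : Fin 5 → ℝ) (X : V) (k : Fin 5) : diagMap d X k = d k * X k := rfl

lemma X_decomp (X : V) : X = X 0 • E 0 + X 1 • E 1 + X 2 • E 2 + X 3 • E 3 + X 4 • E 4 := by
  funext j; fin_cases j <;> simp [E_apply]

set_option maxHeartbeats 2000000 in
theorem stmt5 (m u v w x : ℝ) (hm : 0 < m) (hv : 0 < v) (hx : 0 < x) (hw : 0 ≤ w)
    (Ric : V →ₗ[ℝ] V) (hRic : IsRicci (br m u v w x) Ric) :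
    ((∃ (c : ℝ) (D : V →ₗ[ℝ] V), IsDerivation (br m u v w x) D ∧
        Ric = c • (LinearMap.id : V →ₗ[ℝ] V) + D) ↔ (x = m ∧ u = 0 ∧ w = 0 ∧ v = (2 / Real.sqrt 3) * m)) ∧
    (∀ (c : ℝ) (D : V →ₗ[ℝ] V), IsDerivation (br m u v w x) D →
        Ric = c • (LinearMap.id : V →ₗ[ℝ] V) + D → c = -2 * m ^ 2) := by
  have hR := ric_entries m u v w x Ric hRic
  have hs3 : (0:ℝ) < Real.sqrt 3 := by positivity
  have hsq3 : Real.sqrt 3 ^ 2 = 3 := Real.sq_sqrt (by norm_num)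
  -- bracket values on basis vectors
  have hb1 : br m u v w x (E 0) (E 1) = m • E 2 + u • E 4 := by
    funext k; fin_cases k <;> simp [br_apply, E_apply, Pi.add_apply, Pi.smul_apply]
  have hb2 : br m u v w x (E 0) (E 2) = v • E 3 + w • E 4 := by
    funext k; fin_cases k <;> simp [br_apply, E_apply, Pi.add_apply, Pi.smul_apply]
  have hb3 : br m u v w x (E 0) (E 3) = x • E 4 := by
    funext k; fin_cases k <;> simp [br_apply, E_apply, Pi.smul_apply]
  have key : ∀ (c : ℝ) (D : V →ₗ[ℝ] V), IsDerivation (br m u v w x) D →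
      Ric = c • (LinearMap.id : V →ₗ[ℝ] V) + D →
      (x = m ∧ u = 0 ∧ w = 0 ∧ v = (2 / Real.sqrt 3) * m ∧ c = -2 * m ^ 2) := by
    intro c D hder heq
    have hD : ∀ j k : Fin 5, D (E j) k = Rmat m u v w x j k - (if k = j then c else 0) := by
      intro j k
      have h1 : Ric (E j) k = c * E j k + D (E j) k := by
        rw [heq]; simp [Pi.add_apply, Pi.smul_apply, smul_eq_mul]
      rw [hR j k] at h1
      rw [E_apply] at h1
      rcases eq_or_ne k j with h | h <;> simp [h] at h1 ⊢ <;> linarith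
    -- equation from [E0,E1], component 2
    have h01 := hder (E 0) (E 1)
    rw [hb1, map_add, map_smul, map_smul] at h01
    have e1 := congrFun h01 2
    simp [br_apply, E_apply, hD, Rmat, Pi.add_apply, Pi.smul_apply, smul_eq_mul] at e1
    -- equation from [E0,E2], component 3
    have h02 := hder (E 0) (E 2)
    rw [hb2, map_add, map_smul, map_smul] at h02
    have e2 := congrFun h02 3
    simp [br_apply, E_apply, hD, Rmat, Pi.add_apply, Pi.smul_apply, smul_eq_mul] at e2
    -- equations from [E0,E3]
    have h03 := hder (E 0) (E 3)
    rw [hb3, map_smul] at h03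
    have e3 := congrFun h03 2
    have e4 := congrFun h03 3
    have e5 := congrFun h03 4
    simp [br_apply, E_apply, hD, Rmat, Pi.add_apply, Pi.smul_apply, smul_eq_mul] at e3 e4 e5
    have hu : u = 0 := by
      by_contra h
      exact (mul_ne_zero (mul_ne_zero hm.ne' h) hx.ne')
        (by linear_combination e3)
    have hw0 : w = 0 := by
      by_contra h
      exact (mul_ne_zero (mul_ne_zero hv.ne' h) hx.ne')
        (by linear_combination e4)
    subst hu; subst hw0
    have hc1 : c = -(3*m^2+x^2)/2 := by
      have h : m * (c + (3*m^2+x^2)/2) = 0 := by linear_combination e1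
      rcases mul_eq_zero.mp h with h' | h'
      · exact absurd h' hm.ne'
      · linarith
    have hc2 : c = -(3*v^2)/2 := by
      have h : v * (c + 3*v^2/2) = 0 := by linear_combination e2
      rcases mul_eq_zero.mp h with h' | h'
      · exact absurd h' hv.ne'
      · linarith
    have hc3 : c = -(m^2+3*x^2)/2 := by
      have h : x * (c + (m^2+3*x^2)/2) = 0 := by linear_combination e5
      rcases mul_eq_zero.mp h with h' | h'
      · exact absurd h' hx.ne'
      · linarith
    have hx2 : x^2 = m^2 := by linarith
    have hxm : x = m := by
      have h : (x - m) * (x + m) = 0 := by linear_combination hx2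
      rcases mul_eq_zero.mp h with h' | h'
      · linarith
      · linarith [hx.trans_le (le_of_eq rfl), hm]
    have hc : c = -2 * m^2 := by
      rw [hc1, hx2]; ring
    have hv2 : v^2 = 4/3 * m^2 := by
      have h2 := hc2.symm.trans hc
      linarith
    have hvm : v = 2 / Real.sqrt 3 * m := by
      have h : (v * Real.sqrt 3 - 2*m) * (v * Real.sqrt 3 + 2*m) = 0 := by
        linear_combination v^2 * hsq3 + 3 * hv2
      rcases mul_eq_zero.mp h with h' | h'
      · have hvs : v * Real.sqrt 3 = 2 * m := by linarith
        field_simp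
        linarith
      · linarith [mul_pos hv hs3]
    exact ⟨hxm, rfl, rfl, hvm, hc⟩
  constructor
  · constructor
    · rintro ⟨c, D, hder, heq⟩
      obtain ⟨h1, h2, h3, h4, _⟩ := key c D hder heq
      exact ⟨h1, h2, h3, h4⟩
    · rintro ⟨hxm, hu, hw0, hvm⟩
      subst hu; subst hw0
      have hxm' : m = x := hxm.symm
      subst hxm'
      have hv2 : v^2 = 4/3 * m^2 := by
        rw [hvm, mul_pow, div_pow, hsq3]; ring
      refine ⟨-2 * m^2, diagMap (dvec m), ?_, ?_⟩
      · intro X Y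
        funext k
        fin_cases k <;>
          simp [diagMap_apply, br_apply, E_apply, dvec, Pi.add_apply] <;> ring
      · apply LinearMap.ext
        intro X
        conv_lhs => rw [X_decomp X, map_add, map_add, map_add, map_add,
          map_smul, map_smul, map_smul, map_smul, map_smul]
        funext k
        simp only [Pi.add_apply, Pi.smul_apply, smul_eq_mul, LinearMap.add_apply,
          LinearMap.smul_apply, LinearMap.id_apply, diagMap_apply]
        fin_cases k
        · simp [hR, Rmat, dvec, diagMap_apply]; linear_combination (-(X 0)/2) * hv2
        · simp [hR, Rmat, dvec, diagMap_apply]; ring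
        · simp [hR, Rmat, dvec, diagMap_apply]; linear_combination (-(X 2)/2) * hv2
        · simp [hR, Rmat, dvec, diagMap_apply]; linear_combination ((X 3)/2) * hv2
        · simp [hR, Rmat, dvec, diagMap_apply]; ring
  · intro c D hder heq
    exact (key c D hder heq).2.2.2.2

end

end Nilsoliton5
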